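/- Let t satisfy 0 < t < π/3 and 5cos t − 3 ≥ 0. Define the envelope points ξ₁(t) = (√(5cos t − 3)/(2√(cos t + 1)), −2 sin t/(cos t + 1)) and ξ₂(t) = (−√(5cos t − 3)/(2√(cos t + 1)), −2 sin t/(cos t + 1)). Then: (i) each ξᵢ(t) lies on the ellipse 4x² + y² = 1; (ii) each ξᵢ(t) lies on the inellipse ℰ_t, i.e. with a(t) = √(2cos t − 1)/2 and b(t) = √((2cos t − 1)(1 − cos t))/√2 it satisfies x²/a(t)² + (y + sin t)²/b(t)² = 1; and (iii) the foci of the ellipse 4x² + y² = 1 are (0, √3/2) and (0, −√3/2). -/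

import Mathlib

open Real

theorem stmt_13 (t : ℝ) (ht0 : 0 < t) (ht1 : t < Real.pi / 3)
    (ht2 : 0 ≤ 5 * Real.cos t - 3)
    (x₁ x₂ y : ℝ)
    (hx₁ : x₁ = Real.sqrt (5 * Real.cos t - 3) / (2 * Real.sqrt (Real.cos t + 1)))
    (hx₂ : x₂ = -(Real.sqrt (5 * Real.cos t - 3) / (2 * Real.sqrt (Real.cos t + 1))))
    (hy : y = -(2 * Real.sin t / (Real.cos t + 1)))
    (a b : ℝ)
    (ha : a = Real.sqrt (2 * Real.cos t - 1) / 2)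
    (hb : b = Real.sqrt ((2 * Real.cos t - 1) * (1 - Real.cos t)) / Real.sqrt 2) :
    -- (i) the envelope points lie on the ellipse 4x² + y² = 1
    (4 * x₁ ^ 2 + y ^ 2 = 1 ∧ 4 * x₂ ^ 2 + y ^ 2 = 1) ∧
    -- (ii) the envelope points lie on the inellipse ℰ_t
    (x₁ ^ 2 / a ^ 2 + (y + Real.sin t) ^ 2 / b ^ 2 = 1 ∧
     x₂ ^ 2 / a ^ 2 + (y + Real.sin t) ^ 2 / b ^ 2 = 1) ∧
    -- (iii) the foci of the ellipse 4x² + y² = 1 are (0, ±√3/2)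
    (∀ p : EuclideanSpace ℝ (Fin 2), 4 * (p 0) ^ 2 + (p 1) ^ 2 = 1 →
      dist p (WithLp.toLp 2 ![0, Real.sqrt 3 / 2] : EuclideanSpace ℝ (Fin 2)) +
        dist p (WithLp.toLp 2 ![0, -(Real.sqrt 3 / 2)] : EuclideanSpace ℝ (Fin 2)) = 2) := by
  have hπ := Real.pi_pos
  have hc35 : (3:ℝ)/5 ≤ Real.cos t := by linarith
  have hc1 : (0:ℝ) < Real.cos t + 1 := by linarith
  have hcl : Real.cos t < 1 := by
    have := Real.cos_lt_cos_of_nonneg_of_le_pi (le_refl 0) (by linarith : t ≤ Real.pi) ht0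
    simpa using this
  have h2c : (0:ℝ) < 2 * Real.cos t - 1 := by linarith
  have hsin := Real.sin_sq t
  -- squares
  have hX : x₁ ^ 2 = (5 * Real.cos t - 3) / (4 * (Real.cos t + 1)) := by
    rw [hx₁, div_pow, mul_pow, Real.sq_sqrt ht2, Real.sq_sqrt hc1.le]; ring
  have hX2 : x₂ ^ 2 = (5 * Real.cos t - 3) / (4 * (Real.cos t + 1)) := by
    rw [hx₂, neg_pow, ← hx₁]
    simpa [hx₁] using hX
  have hY : y ^ 2 = 4 * (1 - Real.cos t) / (Real.cos t + 1) := by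
    rw [hy]
    field_simp
    linear_combination (4 : ℝ) * hsin
  have hYS : (y + Real.sin t) ^ 2 = (1 - Real.cos t) ^ 3 / (Real.cos t + 1) := by
    rw [hy]
    field_simp
    linear_combination ((1 - Real.cos t)^2) * hsin
  have ha2 : a ^ 2 = (2 * Real.cos t - 1) / 4 := by
    rw [ha, div_pow, Real.sq_sqrt h2c.le]; norm_num
  have hb2 : b ^ 2 = (2 * Real.cos t - 1) * (1 - Real.cos t) / 2 := by
    rw [hb, div_pow, Real.sq_sqrt (by nlinarith : (0:ℝ) ≤ (2 * Real.cos t - 1) * (1 - Real.cos t)),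
      Real.sq_sqrt (by norm_num : (0:ℝ) ≤ 2)]
  have hone : 4 * x₁ ^ 2 + y ^ 2 = 1 := by
    rw [hX, hY]; field_simp; ring
  have hin : x₁ ^ 2 / a ^ 2 + (y + Real.sin t) ^ 2 / b ^ 2 = 1 := by
    rw [hX, hYS, ha2, hb2]
    have h1c : (1:ℝ) - Real.cos t ≠ 0 := by linarith
    field_simp
    rw [div_eq_iff (by linarith)]; ring
  refine ⟨⟨hone, by rw [hX2, hY]; field_simp; ring⟩, ⟨hin, by rw [hX2] at *; rw [← hX] at *; exact hin⟩, ?_⟩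
  intro p hp
  clear hx₁ hx₂ hy ha hb ht0 ht1 ht2 hX hX2 hY hYS ha2 hb2 hone hin hsin hπ hc35 hc1 hcl h2c
  clear x₁ x₂ y a b t
  have hd1 : dist p (WithLp.toLp 2 ![0, Real.sqrt 3 / 2] : EuclideanSpace ℝ (Fin 2)) =
      Real.sqrt ((p 0 - 0) ^ 2 + (p 1 - Real.sqrt 3 / 2) ^ 2) := by
    rw [EuclideanSpace.dist_eq, Fin.sum_univ_two]
    simp [Real.dist_eq, sq_abs]
  have hd2 : dist p (WithLp.toLp 2 ![0, -(Real.sqrt 3 / 2)] : EuclideanSpace ℝ (Fin 2)) =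
      Real.sqrt ((p 0 - 0) ^ 2 + (p 1 - -(Real.sqrt 3 / 2)) ^ 2) := by
    rw [EuclideanSpace.dist_eq, Fin.sum_univ_two]
    simp [Real.dist_eq, sq_abs]
  rw [hd1, hd2]
  generalize p 0 = X at hp ⊢
  generalize p 1 = Y at hp ⊢
  have h3 : Real.sqrt 3 ^ 2 = 3 := Real.sq_sqrt (by norm_num)
  have h3n : (0:ℝ) ≤ Real.sqrt 3 := Real.sqrt_nonneg 3
  have h32 : Real.sqrt 3 ≤ 2 := by
    calc Real.sqrt 3 ≤ Real.sqrt 4 := Real.sqrt_le_sqrt (by norm_num)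
    _ = 2 := by rw [show (4:ℝ) = 2^2 by norm_num, Real.sqrt_sq (by norm_num : (0:ℝ) ≤ 2)]
  have hY1 : Y ^ 2 ≤ 1 := by nlinarith [sq_nonneg X]
  have hYa : -1 ≤ Y := by nlinarith [sq_nonneg (Y + 1)]
  have hYb : Y ≤ 1 := by nlinarith [sq_nonneg (Y - 1)]
  have hk1 : (0:ℝ) ≤ (2 - Real.sqrt 3 * Y) / 2 := by
    have := mul_le_mul_of_nonneg_left hYb h3n
    linarith
  have hk2 : (0:ℝ) ≤ (2 + Real.sqrt 3 * Y) / 2 := by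
    have := mul_le_mul_of_nonneg_left hYa h3n
    linarith
  have e1 : (X - 0) ^ 2 + (Y - Real.sqrt 3 / 2) ^ 2 = ((2 - Real.sqrt 3 * Y) / 2) ^ 2 := by
    linear_combination (1/4) * hp + ((1 - Y^2)/4) * h3
  have e2 : (X - 0) ^ 2 + (Y - -(Real.sqrt 3 / 2)) ^ 2 = ((2 + Real.sqrt 3 * Y) / 2) ^ 2 := by
    linear_combination (1/4) * hp + ((1 - Y^2)/4) * h3
  rw [e1, e2, Real.sqrt_sq hk1, Real.sqrt_sq hk2]
  ring
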